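/- Let T, M, C be positive reals with 0 < T/C < 0.9, and set x₀ = (√(T(C−T)) + T)/M. Then F(x₀) < 0, where F(x) = ln(1 − T/(Mx)) + (T/(Mx))/(1 − T/(Mx)) + ln(1 − T/C). -/

import Mathlib

open Real

private lemma expQ {x : ℝ} (h1 : 0 ≤ x) (h2 : x ≤ 1) :
    Real.exp x ≤ 1 + x + x^2/2 + 2*x^3/9 := by
  have := Real.exp_bound' h1 h2 (n := 3) (by norm_num)
  simp [Finset.sum_range_succ, Nat.factorial] at this
  nlinarith [this]

private lemma key {u : ℝ} (hu : 0 < u) (hu3 : u < 3) :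
    Real.exp u < 1 + u + u^2 + u^3 := by
  rcases le_or_gt u 1 with h | h
  · have := expQ hu.le h
    nlinarith
  · have hx1 : (0:ℝ) ≤ (u-1)/2 := by linarith
    have hx2 : (u-1)/2 ≤ 1 := by linarith
    have hq := expQ hx1 hx2
    have he1 : Real.exp 1 < 2.7182818286 := Real.exp_one_lt_d9
    have hsplit : Real.exp u = Real.exp 1 * (Real.exp ((u-1)/2) * Real.exp ((u-1)/2)) := by
      rw [← Real.exp_add, ← Real.exp_add]; ring_nf
    rw [hsplit]
    have hqpos : (0:ℝ) < 1 + (u-1)/2 + ((u-1)/2)^2/2 + 2*((u-1)/2)^3/9 := by nlinarith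
    have hexppos := Real.exp_pos ((u-1)/2)
    have h2 : Real.exp ((u-1)/2) * Real.exp ((u-1)/2) ≤
        (1 + (u-1)/2 + ((u-1)/2)^2/2 + 2*((u-1)/2)^3/9)^2 := by
      nlinarith [hq, hexppos.le]
    calc Real.exp 1 * (Real.exp ((u-1)/2) * Real.exp ((u-1)/2))
        ≤ 2.7182818286 * ((1 + (u-1)/2 + ((u-1)/2)^2/2 + 2*((u-1)/2)^3/9)^2) := by
          nlinarith [Real.exp_pos 1, (mul_pos hexppos hexppos)]
      _ < 1 + u + u^2 + u^3 := by
          nlinarith [sq_nonneg (u-1), sq_nonneg (u-3), sq_nonneg ((u-1)*(u-3))]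

private lemma keylog {u : ℝ} (hu : 0 < u) (hu3 : u < 3) :
    u - Real.log (1 + u) - Real.log (1 + u^2) < 0 := by
  have h1 : (0:ℝ) < 1 + u := by linarith
  have h2 : (0:ℝ) < 1 + u^2 := by positivity
  have hA : Real.exp u < (1+u) * (1+u^2) := by
    have := key hu hu3
    nlinarith
  have := Real.log_lt_log (Real.exp_pos u) hA
  rw [Real.log_exp, Real.log_mul (ne_of_gt h1) (ne_of_gt h2)] at this
  linarith

theorem test_point (T M C : ℝ) (hT : 0 < T) (hM : 0 < M) (hC : 0 < C)
    (hTC : T / C < 0.9) :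
    let x₀ := (Real.sqrt (T * (C - T)) + T) / M
    Real.log (1 - T / (M * x₀)) + (T / (M * x₀)) / (1 - T / (M * x₀)) +
      Real.log (1 - T / C) < 0 := by
  intro x₀
  have hT9 : T < 0.9 * C := (div_lt_iff₀ hC).mp hTC
  have hCT : 0 < C - T := by linarith
  set s := Real.sqrt (T * (C - T)) with hs_def
  have hs : 0 < s := Real.sqrt_pos.mpr (by positivity)
  have hs2 : s ^ 2 = T * (C - T) := Real.sq_sqrt (by positivity)
  have hMx : M * x₀ = s + T := by
    show M * ((s + T) / M) = s + T
    field_simp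
  set u := T / s with hu_def
  have hu : 0 < u := div_pos hT hs
  have hu2 : u ^ 2 = T / (C - T) := by
    rw [hu_def, div_pow, hs2]
    rw [div_eq_div_iff (by positivity) (by positivity)]
    ring
  have hu3 : u < 3 := by
    have h9 : u ^ 2 < 9 := by rw [hu2, div_lt_iff₀ hCT]; nlinarith
    nlinarith
  rw [hMx]
  have hsT : 0 < s + T := by linarith
  have e1 : 1 - T / (s + T) = 1 / (1 + u) := by
    rw [hu_def]; field_simp; ring
  have e2 : (T / (s + T)) / (1 / (1 + u)) = u := by
    have h1u : (0:ℝ) < 1 + u := by linarith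
    rw [hu_def]; field_simp
  have e3 : 1 - T / C = 1 / (1 + u ^ 2) := by
    rw [hu2]; field_simp; ring
  rw [e1, e2, e3, one_div, one_div, Real.log_inv, Real.log_inv]
  have := keylog hu hu3
  linarith
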